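/- First moment of the q-Lagrange-Hermite operator: For the operator R_{n,q}^{α⁽¹⁾,…,α⁽ʳ⁾} and g(s) = s, one has R_{n,q}^{α⁽¹⁾,…,α⁽ʳ⁾}(s; x) = x·αₙ⁽¹⁾ for all x ∈ [0,1]. -/

import Mathlib

open Filter

/-- The q-integer `[m]_q = (1 - q^m)/(1 - q)`. -/
noncomputable def qInt (q : ℝ) (m : ℕ) : ℝ := (1 - q ^ m) / (1 - q)

/-- The q-Pochhammer symbol `(ρ;q)_m = ∏_{j=0}^{m-1} (1 - ρ qʲ)`. -/
noncomputable def qPoch (ρ q : ℝ) (m : ℕ) : ℝ := ∏ j ∈ Finset.range m, (1 - ρ * q ^ j)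

/-- The multivariate q-Lagrange-Hermite operator
`R_{n,q}^{α⁽¹⁾,…,α⁽ʳ⁾}(g;x)`, written as an absolutely rearranged sum over the
multi-indices `l = (l₁,…,l_r)` with `x^{l₁+2l₂+⋯+r·l_r}`. -/
noncomputable def LHOp (q : ℝ) (n r : ℕ) (hr : 0 < r) (α : Fin r → ℝ)
    (g : ℝ → ℝ) (x : ℝ) : ℝ :=
  (∏ i : Fin r, qPoch (α i * x ^ ((i : ℕ) + 1)) q n) *
    ∑' l : Fin r → ℕ,
      (∏ k : Fin r, qPoch (q ^ n) q (l k) * α k ^ (l k) / qPoch q q (l k)) *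
        g (qInt q (l ⟨0, hr⟩) / qInt q (n + l ⟨0, hr⟩ - 1)) *
        x ^ (∑ k : Fin r, ((k : ℕ) + 1) * l k)

noncomputable def qc (q : ℝ) (n m : ℕ) : ℝ := qPoch (q ^ n) q m / qPoch q q m

lemma qPoch_succ (ρ q : ℝ) (m : ℕ) : qPoch ρ q (m + 1) = qPoch ρ q m * (1 - ρ * q ^ m) :=
  Finset.prod_range_succ _ m

lemma qPoch_shift (q : ℝ) (a m : ℕ) :
    qPoch (q ^ a) q (m + 1) = (1 - q ^ a) * qPoch (q ^ (a + 1)) q m := by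
  unfold qPoch
  rw [Finset.prod_range_succ']
  simp only [pow_zero, mul_one]
  rw [mul_comm]
  congr 1
  refine Finset.prod_congr rfl fun j _ => ?_
  ring

lemma qPoch_pos {q ρ : ℝ} (hq : 0 < q) (hq1 : q < 1) (hρ0 : 0 ≤ ρ) (hρ1 : ρ < 1) (m : ℕ) :
    0 < qPoch ρ q m := by
  refine Finset.prod_pos fun j _ => ?_
  have h1 : q ^ j ≤ 1 := pow_le_one₀ hq.le hq1.le
  nlinarith [pow_pos hq j]

lemma qPoch_nonneg {q ρ : ℝ} (hq : 0 < q) (hq1 : q < 1) (hρ0 : 0 ≤ ρ) (hρ1 : ρ ≤ 1) (m : ℕ) :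
    0 ≤ qPoch ρ q m := by
  refine Finset.prod_nonneg fun j _ => ?_
  have h1 : q ^ j ≤ 1 := pow_le_one₀ hq.le hq1.le
  nlinarith [pow_pos hq j]

lemma qc_nonneg {q : ℝ} (hq : 0 < q) (hq1 : q < 1) (n m : ℕ) : 0 ≤ qc q n m := by
  unfold qc
  have := qPoch_pos hq hq1 hq.le hq1 m
  exact div_nonneg (qPoch_nonneg hq hq1 (by positivity) (pow_le_one₀ hq.le hq1.le) m) this.le

lemma qc_summable {q : ℝ} (hq : 0 < q) (hq1 : q < 1) (n : ℕ) {t : ℝ} (ht0 : 0 ≤ t) (ht1 : t < 1) :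
    Summable (fun m => qc q n m * t ^ m) := by
  have h1t : (0:ℝ) < 1 + t := by linarith
  have hr1 : 2 * t / (1 + t) < 1 := by rw [div_lt_one h1t]; linarith
  apply summable_of_ratio_norm_eventually_le hr1
  have hh : ∀ᶠ m : ℕ in atTop, q ^ (m + 1) < (1 - t) / 2 := by
    have h2 : Tendsto (fun m : ℕ => q ^ (m + 1)) atTop (nhds 0) :=
      (tendsto_pow_atTop_nhds_zero_of_lt_one hq.le hq1).comp (tendsto_add_atTop_nat 1)
    exact h2.eventually_lt_const (by linarith)
  filter_upwards [hh] with m hm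
  have hDm : 0 < qPoch q q m := qPoch_pos hq hq1 hq.le hq1 m
  have hqm1 : q * q ^ m = q ^ (m + 1) := by ring
  have hden : 0 < 1 - q * q ^ m := by
    rw [hqm1]; nlinarith
  have hnum0 : 0 ≤ 1 - q ^ n * q ^ m := by
    nlinarith [pow_le_one₀ hq.le hq1.le (n := n), pow_le_one₀ hq.le hq1.le (n := m),
      pow_pos hq n, pow_pos hq m]
  have key : qc q n (m + 1) * t ^ (m + 1)
      = (qc q n m * t ^ m) * (t * (1 - q ^ n * q ^ m) / (1 - q * q ^ m)) := by
    unfold qc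
    rw [qPoch_succ (q ^ n) q m, qPoch_succ q q m]
    field_simp
    ring
  have hfac0 : 0 ≤ t * (1 - q ^ n * q ^ m) / (1 - q * q ^ m) := by positivity
  have hfacr : t * (1 - q ^ n * q ^ m) / (1 - q * q ^ m) ≤ 2 * t / (1 + t) := by
    rw [div_le_div_iff₀ hden h1t]
    rw [hqm1] at hden ⊢
    nlinarith [pow_pos hq (m + 1), mul_nonneg ht0 (pow_pos hq (m+1)).le,
      mul_nonneg (mul_nonneg ht0 (pow_pos hq n).le) (pow_pos hq m).le]
  have hf0 : 0 ≤ qc q n m * t ^ m := mul_nonneg (qc_nonneg hq hq1 n m) (pow_nonneg ht0 m)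
  have hf1 : 0 ≤ qc q n (m + 1) * t ^ (m + 1) :=
    mul_nonneg (qc_nonneg hq hq1 n (m + 1)) (pow_nonneg ht0 (m + 1))
  rw [Real.norm_eq_abs, Real.norm_eq_abs, abs_of_nonneg hf1, abs_of_nonneg hf0, key]
  calc (qc q n m * t ^ m) * (t * (1 - q ^ n * q ^ m) / (1 - q * q ^ m))
      ≤ (qc q n m * t ^ m) * (2 * t / (1 + t)) := by
        exact mul_le_mul_of_nonneg_left hfacr hf0
    _ = 2 * t / (1 + t) * (qc q n m * t ^ m) := by ring

lemma qc_rec {q : ℝ} (hq : 0 < q) (hq1 : q < 1) (n m : ℕ) :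
    qc q (n + 1) (m + 1) = qc q n (m + 1) + q ^ n * qc q (n + 1) m := by
  have hD : qPoch q q m ≠ 0 := (qPoch_pos hq hq1 hq.le hq1 m).ne'
  have hden : (1 : ℝ) - q * q ^ m ≠ 0 := by
    have : q * q ^ m = q ^ (m + 1) := by ring
    rw [this]
    exact sub_ne_zero.2 (pow_lt_one₀ hq.le hq1 (Nat.succ_ne_zero m)).ne'
  unfold qc
  rw [qPoch_succ (q ^ (n + 1)) q m, qPoch_shift q n m, qPoch_succ q q m]
  field_simp
  have hI : (1 - q * q ^ m)⁻¹ * (1 - q * q ^ m) = 1 := inv_mul_cancel₀ hden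
  rw [show q ^ (n + 1) = q * q ^ n by ring]
  linear_combination (q ^ n * qPoch (q * q ^ n) q m) * hI

set_option maxHeartbeats 1000000 in
lemma euler {q : ℝ} (hq : 0 < q) (hq1 : q < 1) (n : ℕ) :
    ∀ {t : ℝ}, 0 ≤ t → t < 1 → (∑' m, qc q n m * t ^ m) * qPoch t q n = 1 := by
  induction n with
  | zero =>
    intro t ht0 ht1
    have h0 : ∀ m : ℕ, m ≠ 0 → qc q 0 m * t ^ m = 0 := by
      intro m hm
      have hz : qPoch (q ^ 0) q m = 0 := by
        unfold qPoch
        apply Finset.prod_eq_zero (Finset.mem_range.2 (Nat.pos_of_ne_zero hm))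
        simp
      unfold qc; rw [hz]; simp
    rw [tsum_eq_single 0 h0]
    simp [qc, qPoch]
  | succ n ih =>
    intro t ht0 ht1
    have hfs : Summable (fun m => qc q (n + 1) m * t ^ m) := qc_summable hq hq1 (n + 1) ht0 ht1
    have hTs : Summable (fun m => qc q n m * t ^ m) := qc_summable hq hq1 n ht0 ht1
    set S : ℝ := ∑' m, qc q (n + 1) m * t ^ m with hSdef
    set T : ℝ := ∑' m, qc q n m * t ^ m with hTdef
    have hterm : ∀ m, qc q (n + 1) (m + 1) * t ^ (m + 1)
        = qc q n (m + 1) * t ^ (m + 1) + (q ^ n * t) * (qc q (n + 1) m * t ^ m) := by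
      intro m; rw [qc_rec hq hq1 n m]; ring
    have hshift : Summable (fun m => qc q n (m + 1) * t ^ (m + 1)) := by
      exact (summable_nat_add_iff 1).2 hTs
    have h1 : S = qc q (n + 1) 0 * t ^ 0 + ∑' m, qc q (n + 1) (m + 1) * t ^ (m + 1) :=
      hfs.tsum_eq_zero_add
    have h2 : ∑' m, qc q (n + 1) (m + 1) * t ^ (m + 1)
        = (∑' m, qc q n (m + 1) * t ^ (m + 1)) + (q ^ n * t) * S := by
      calc ∑' m, qc q (n + 1) (m + 1) * t ^ (m + 1)
          = ∑' m, (qc q n (m + 1) * t ^ (m + 1) + (q ^ n * t) * (qc q (n + 1) m * t ^ m)) :=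
            tsum_congr hterm
        _ = (∑' m, qc q n (m + 1) * t ^ (m + 1))
            + ∑' m, (q ^ n * t) * (qc q (n + 1) m * t ^ m) :=
            hshift.tsum_add (hfs.mul_left _)
        _ = _ := by rw [tsum_mul_left]
    have h3 : T = qc q n 0 * t ^ 0 + ∑' m, qc q n (m + 1) * t ^ (m + 1) := hTs.tsum_eq_zero_add
    have h00 : ∀ k : ℕ, qc q k 0 * t ^ 0 = 1 := by intro k; simp [qc, qPoch]
    rw [h00] at h1 h3
    have hEq : S = T + q ^ n * t * S := by
      calc S = 1 + ∑' m, qc q (n + 1) (m + 1) * t ^ (m + 1) := h1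
        _ = 1 + ((∑' m, qc q n (m + 1) * t ^ (m + 1)) + q ^ n * t * S) := by rw [h2]
        _ = T + q ^ n * t * S := by rw [h3]; ring
    rw [qPoch_succ t q n]
    calc S * (qPoch t q n * (1 - t * q ^ n))
        = (S * (1 - q ^ n * t)) * qPoch t q n := by ring
      _ = T * qPoch t q n := by rw [show S * (1 - q ^ n * t) = T by linear_combination hEq]
      _ = 1 := ih ht0 ht1

noncomputable def qw (q : ℝ) (n m : ℕ) : ℝ := qInt q m / qInt q (n + m - 1)

lemma qw_zero (q : ℝ) (n : ℕ) : qw q n 0 = 0 := by simp [qw, qInt]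

lemma qw_mem {q : ℝ} (hq : 0 < q) (hq1 : q < 1) {n : ℕ} (hn : 1 ≤ n) (m : ℕ) :
    0 ≤ qw q n m ∧ qw q n m ≤ 1 := by
  cases m with
  | zero => rw [qw_zero]; norm_num
  | succ m =>
    have harg : n + (m + 1) - 1 = n + m := by omega
    have hq1' : (0:ℝ) < 1 - q := by linarith
    have h1 : q ^ (m + 1) < 1 := pow_lt_one₀ hq.le hq1 (Nat.succ_ne_zero m)
    have h2 : q ^ (n + m) < 1 := pow_lt_one₀ hq.le hq1 (by omega)
    have h3 : q ^ (n + m) ≤ q ^ (m + 1) := pow_le_pow_of_le_one hq.le hq1.le (by omega)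
    have hd : 0 < qInt q (n + m) := div_pos (by linarith) hq1'
    unfold qw
    rw [harg]
    constructor
    · apply div_nonneg _ hd.le
      exact div_nonneg (by linarith) hq1'.le
    · rw [div_le_one hd]
      unfold qInt
      rw [div_le_div_iff₀ hq1' hq1']
      nlinarith

lemma qw_shift {q : ℝ} (hq : 0 < q) (hq1 : q < 1) {n : ℕ} (hn : 1 ≤ n) (m : ℕ) :
    qc q n (m + 1) * qw q n (m + 1) = qc q n m := by
  have harg : n + (m + 1) - 1 = n + m := by omega
  have hq1' : (1:ℝ) - q ≠ 0 := by intro h; linarith [hq1]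
  have h2 : (1:ℝ) - q ^ (n + m) ≠ 0 :=
    sub_ne_zero.2 (pow_lt_one₀ hq.le hq1 (by omega)).ne'
  have h1 : (1:ℝ) - q * q ^ m ≠ 0 := by
    have : q * q ^ m = q ^ (m + 1) := by ring
    rw [this]
    exact sub_ne_zero.2 (pow_lt_one₀ hq.le hq1 (Nat.succ_ne_zero m)).ne'
  have hD : qPoch q q m ≠ 0 := (qPoch_pos hq hq1 hq.le hq1 m).ne'
  unfold qc qw qInt
  rw [harg, qPoch_succ (q ^ n) q m, qPoch_succ q q m]
  have hnm : q ^ n * q ^ m = q ^ (n + m) := by rw [pow_add]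
  field_simp
  have hI : (1 - q * q ^ m)⁻¹ * (1 - q * q ^ m) = 1 := inv_mul_cancel₀ h1
  linear_combination (qPoch (q ^ n) q m * (1 - q ^ n * q ^ m)) * hI

lemma qcw_summable {q : ℝ} (hq : 0 < q) (hq1 : q < 1) {n : ℕ} (hn : 1 ≤ n) {t : ℝ}
    (ht0 : 0 ≤ t) (ht1 : t < 1) : Summable (fun m => qc q n m * t ^ m * qw q n m) := by
  apply Summable.of_nonneg_of_le
    (fun m => mul_nonneg (mul_nonneg (qc_nonneg hq hq1 n m) (pow_nonneg ht0 m))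
      (qw_mem hq hq1 hn m).1)
    (fun m => ?_) (qc_summable hq hq1 n ht0 ht1)
  calc qc q n m * t ^ m * qw q n m ≤ qc q n m * t ^ m * 1 := by
        apply mul_le_mul_of_nonneg_left (qw_mem hq hq1 hn m).2
        exact mul_nonneg (qc_nonneg hq hq1 n m) (pow_nonneg ht0 m)
    _ = qc q n m * t ^ m := by ring

lemma moment {q : ℝ} (hq : 0 < q) (hq1 : q < 1) {n : ℕ} (hn : 1 ≤ n) {t : ℝ}
    (ht0 : 0 ≤ t) (ht1 : t < 1) :
    ∑' m, qc q n m * t ^ m * qw q n m = t * ∑' m, qc q n m * t ^ m := by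
  rw [(qcw_summable hq hq1 hn ht0 ht1).tsum_eq_zero_add]
  have hterm : ∀ m : ℕ, qc q n (m + 1) * t ^ (m + 1) * qw q n (m + 1)
      = t * (qc q n m * t ^ m) := by
    intro m
    calc qc q n (m + 1) * t ^ (m + 1) * qw q n (m + 1)
        = (qc q n (m + 1) * qw q n (m + 1)) * t ^ (m + 1) := by ring
      _ = qc q n m * t ^ (m + 1) := by rw [qw_shift hq hq1 hn m]
      _ = t * (qc q n m * t ^ m) := by ring
  rw [qw_zero]
  simp only [mul_zero, zero_add]
  rw [tsum_congr hterm, tsum_mul_left]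

lemma summable_pi_prod : ∀ {r : ℕ} (G : Fin r → ℕ → ℝ), (∀ k m, 0 ≤ G k m) →
    (∀ k, Summable (G k)) → Summable (fun l : Fin r → ℕ => ∏ k, G k (l k)) := by
  intro r
  induction r with
  | zero => intro G _ _; exact Summable.of_finite
  | succ r ih =>
    intro G hG0 hGs
    have htail : Summable (fun g : Fin r → ℕ => ∏ k : Fin r, G k.succ (g k)) :=
      ih (fun k => G k.succ) (fun k m => hG0 _ _) (fun k => hGs _)
    have hb : Summable (fun p : ℕ × (Fin r → ℕ) => G 0 p.1 * ∏ k : Fin r, G k.succ (p.2 k)) :=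
      Summable.mul_of_nonneg (f := G 0)
        (g := fun g : Fin r → ℕ => ∏ k : Fin r, G k.succ (g k)) (hGs 0) htail
        (fun m => hG0 0 m) (fun l => Finset.prod_nonneg fun k _ => hG0 _ _)
    rw [← (Fin.consEquiv (fun _ : Fin (r + 1) => ℕ)).summable_iff]
    apply hb.congr
    intro p
    simp [Function.comp, Fin.consEquiv, Fin.prod_univ_succ]

set_option maxHeartbeats 2000000 in
lemma tsum_pi_prod : ∀ {r : ℕ} (G : Fin r → ℕ → ℝ), (∀ k m, 0 ≤ G k m) →
    (∀ k, Summable (G k)) →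
    (∑' l : Fin r → ℕ, ∏ k, G k (l k)) = ∏ k, ∑' m, G k m := by
  intro r
  induction r with
  | zero =>
    intro G _ _
    rw [tsum_eq_single (fun i => i.elim0) (fun l hl => absurd (funext fun i => i.elim0) hl)]
    simp
  | succ r ih =>
    intro G hG0 hGs
    have htail : Summable (fun g : Fin r → ℕ => ∏ k : Fin r, G k.succ (g k)) :=
      summable_pi_prod (fun k => G k.succ) (fun k m => hG0 _ _) (fun k => hGs _)
    have hb : Summable (fun p : ℕ × (Fin r → ℕ) => G 0 p.1 * ∏ k : Fin r, G k.succ (p.2 k)) :=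
      Summable.mul_of_nonneg (f := G 0)
        (g := fun g : Fin r → ℕ => ∏ k : Fin r, G k.succ (g k)) (hGs 0) htail
        (fun m => hG0 0 m) (fun l => Finset.prod_nonneg fun k _ => hG0 _ _)
    have hcons : ∀ p : ℕ × (Fin r → ℕ),
        (∏ k : Fin (r + 1), G k ((Fin.consEquiv (fun _ : Fin (r + 1) => ℕ)) p k))
          = G 0 p.1 * ∏ k : Fin r, G k.succ (p.2 k) := by
      intro p
      simp [Fin.consEquiv, Fin.prod_univ_succ]
    calc (∑' l : Fin (r + 1) → ℕ, ∏ k, G k (l k))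
        = ∑' p : ℕ × (Fin r → ℕ), ∏ k, G k ((Fin.consEquiv (fun _ : Fin (r + 1) => ℕ)) p k) :=
          ((Fin.consEquiv (fun _ : Fin (r + 1) => ℕ)).tsum_eq _).symm
      _ = ∑' p : ℕ × (Fin r → ℕ), G 0 p.1 * ∏ k : Fin r, G k.succ (p.2 k) := tsum_congr hcons
      _ = ∑' a : ℕ, ∑' g : Fin r → ℕ, G 0 a * ∏ k : Fin r, G k.succ (g k) :=
          Summable.tsum_prod' (f := fun p : ℕ × (Fin r → ℕ) => G 0 p.1 * ∏ k : Fin r, G k.succ (p.2 k))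
            hb (fun a => htail.mul_left (G 0 a))
      _ = ∑' a : ℕ, G 0 a * ∑' g : Fin r → ℕ, ∏ k : Fin r, G k.succ (g k) := by
          refine tsum_congr fun a => tsum_mul_left
      _ = (∑' a : ℕ, G 0 a) * ∑' g : Fin r → ℕ, ∏ k : Fin r, G k.succ (g k) := tsum_mul_right
      _ = ∏ k : Fin (r + 1), ∑' m, G k m := by
          rw [ih (fun k => G k.succ) (fun k m => hG0 _ _) (fun k => hGs _), Fin.prod_univ_succ]


set_option maxHeartbeats 2000000 in
/-- First moment: `R_{n,q}^{α⁽¹⁾,…,α⁽ʳ⁾}(s;x) = x·αₙ⁽¹⁾`. -/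
theorem stmt13 (q : ℝ) (hq : 0 < q) (hq1 : q < 1) (r : ℕ) (hr : 0 < r)
    (α : Fin r → ℝ) (hα : ∀ i, α i ∈ Set.Ioo (0 : ℝ) 1) (x : ℝ)
    (hx : x ∈ Set.Icc (0 : ℝ) 1) (n : ℕ) (hn : 1 ≤ n) :
    LHOp q n r hr α (fun s => s) x = x * α ⟨0, hr⟩ := by
  obtain ⟨hx0, hx1⟩ := hx
  have ht : ∀ k : Fin r, 0 ≤ α k * x ^ ((k : ℕ) + 1) ∧ α k * x ^ ((k : ℕ) + 1) < 1 := by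
    intro k
    obtain ⟨ha0, ha1⟩ := hα k
    have hxp : 0 ≤ x ^ ((k : ℕ) + 1) := pow_nonneg hx0 _
    have hxp1 : x ^ ((k : ℕ) + 1) ≤ 1 := pow_le_one₀ hx0 hx1
    refine ⟨mul_nonneg ha0.le hxp, ?_⟩
    calc α k * x ^ ((k : ℕ) + 1) ≤ α k * 1 := mul_le_mul_of_nonneg_left hxp1 ha0.le
      _ < 1 := by rw [mul_one]; exact ha1
  set k0 : Fin r := ⟨0, hr⟩ with hk0
  set G : Fin r → ℕ → ℝ := fun k m =>
    qc q n m * (α k * x ^ ((k : ℕ) + 1)) ^ m * (if k = k0 then qw q n m else 1) with hG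
  have hG0 : ∀ k m, 0 ≤ G k m := by
    intro k m
    apply mul_nonneg (mul_nonneg (qc_nonneg hq hq1 n m) (pow_nonneg (ht k).1 m))
    by_cases h : k = k0
    · rw [if_pos h]; exact (qw_mem hq hq1 hn m).1
    · rw [if_neg h]; norm_num
  have hGs : ∀ k, Summable (G k) := by
    intro k
    by_cases h : k = k0
    · simp only [hG, if_pos h]
      exact qcw_summable hq hq1 hn (ht k).1 (ht k).2
    · simp only [hG, if_neg h, mul_one]
      exact qc_summable hq hq1 n (ht k).1 (ht k).2
  have hsummand : ∀ l : Fin r → ℕ,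
      (∏ k : Fin r, qPoch (q ^ n) q (l k) * α k ^ (l k) / qPoch q q (l k)) *
        (qInt q (l k0) / qInt q (n + l k0 - 1)) * x ^ (∑ k : Fin r, ((k : ℕ) + 1) * l k)
      = ∏ k, G k (l k) := by
    intro l
    have hx' : x ^ (∑ k : Fin r, ((k : ℕ) + 1) * l k)
        = ∏ k : Fin r, (x ^ ((k : ℕ) + 1)) ^ (l k) := by
      rw [← Finset.prod_pow_eq_pow_sum]
      exact Finset.prod_congr rfl fun k _ => (pow_mul x _ _)
    have hw : (qInt q (l k0) / qInt q (n + l k0 - 1))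
        = ∏ k, (if k = k0 then qw q n (l k) else 1) := by
      rw [Finset.prod_ite_eq' Finset.univ k0 (fun k => qw q n (l k))]
      simp [qw]
    rw [hx', hw, ← Finset.prod_mul_distrib, ← Finset.prod_mul_distrib]
    refine Finset.prod_congr rfl fun k _ => ?_
    simp only [hG, qc]
    rw [mul_pow]
    ring
  have h1 : (∑' l : Fin r → ℕ,
      (∏ k : Fin r, qPoch (q ^ n) q (l k) * α k ^ (l k) / qPoch q q (l k)) *
        (qInt q (l k0) / qInt q (n + l k0 - 1)) * x ^ (∑ k : Fin r, ((k : ℕ) + 1) * l k))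
      = ∏ k, ∑' m, G k m := by
    rw [tsum_congr hsummand]
    exact tsum_pi_prod G hG0 hGs
  have hper : ∀ k : Fin r, qPoch (α k * x ^ ((k : ℕ) + 1)) q n * (∑' m, G k m)
      = if k = k0 then α k0 * x ^ ((k0 : ℕ) + 1) else 1 := by
    intro k
    by_cases h : k = k0
    · rw [if_pos h, h]
      have hmom : (∑' m, G k0 m)
          = (α k0 * x ^ ((k0 : ℕ) + 1)) * ∑' m, qc q n m * (α k0 * x ^ ((k0 : ℕ) + 1)) ^ m := by
        have hGk0 : ∀ m, G k0 m = qc q n m * (α k0 * x ^ ((k0 : ℕ) + 1)) ^ m * qw q n m := by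
          intro m; simp [hG]
        rw [tsum_congr hGk0]
        exact moment hq hq1 hn (ht k0).1 (ht k0).2
      rw [hmom]
      have he := euler hq hq1 n (ht k0).1 (ht k0).2
      calc qPoch (α k0 * x ^ ((k0 : ℕ) + 1)) q n *
            ((α k0 * x ^ ((k0 : ℕ) + 1)) * ∑' m, qc q n m * (α k0 * x ^ ((k0 : ℕ) + 1)) ^ m)
          = (α k0 * x ^ ((k0 : ℕ) + 1)) *
            ((∑' m, qc q n m * (α k0 * x ^ ((k0 : ℕ) + 1)) ^ m) *
              qPoch (α k0 * x ^ ((k0 : ℕ) + 1)) q n) := by ring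
        _ = α k0 * x ^ ((k0 : ℕ) + 1) := by rw [he, mul_one]
    · rw [if_neg h]
      have : (∑' m, G k m) = ∑' m, qc q n m * (α k * x ^ ((k : ℕ) + 1)) ^ m := by
        simp only [hG, if_neg h, mul_one]
      rw [this, mul_comm]
      exact euler hq hq1 n (ht k).1 (ht k).2
  unfold LHOp
  rw [h1, ← Finset.prod_mul_distrib]
  calc (∏ k : Fin r, qPoch (α k * x ^ ((k : ℕ) + 1)) q n * ∑' m, G k m)
      = ∏ k : Fin r, (if k = k0 then α k0 * x ^ ((k0 : ℕ) + 1) else 1) :=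
        Finset.prod_congr rfl fun k _ => hper k
    _ = α k0 * x ^ ((k0 : ℕ) + 1) := by
        rw [Finset.prod_ite_eq' Finset.univ k0 (fun _ => α k0 * x ^ ((k0 : ℕ) + 1))]
        simp
    _ = x * α ⟨0, hr⟩ := by
        simp only [hk0]
        norm_num [mul_comm]
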